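/- Work in dimension d = 1. Let n ≥ 2 and let a_1 < b_1 < a_2 < b_2 < … < a_n < b_n be real numbers, so that the segments [a_k, b_k] are pairwise disjoint and ordered from left to right. Let μ_k denote the uniform probability measure on [a_k, b_k] and Q_n = (1/n)·Σ_{i=1}^n μ_i. Then the curve depth of the k-th segment, D_k = ∫ D(x | Q_n, μ_k) dμ_k(x), equals 1/n if k = 1 or k = n, and equals 1/n − ((n−1)/n)·log((1−t_k)^{1−t_k} · t_k^{t_k}) with t_k = (k−1)/(n−1) if 1 < k < n, where log is the natural logarithm. In particular D_k depends only on n and k, not on the positions or lengths of the segments. (Segments-on-a-line example of Section 5.1 of the paper.) -/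

import Mathlib

open MeasureTheory Set Filter
open scoped ENNReal

noncomputable section

/-- Point curve depth in dimension `d = 1`: the unit sphere is `{−1, 1}` and the
closed halfspaces through `x` are the rays `(−∞, x]` and `[x, ∞)`.  The `ℝ≥0∞`
division conventions `a/0 = ∞` for `a > 0` and `0/0 = 0` are in force. -/
def pointDepth1 (Q μ : Measure ℝ) (x : ℝ) : ℝ≥0∞ :=
  min (Q (Set.Iic x) / μ (Set.Iic x)) (Q (Set.Ici x) / μ (Set.Ici x))

/-- The uniform probability measure on `[a, b]` (normalized Lebesgue measure),
which is the arc-length measure of the segment `[a, b]` viewed as a curve. -/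
def unif (a b : ℝ) : Measure ℝ :=
  (ENNReal.ofReal (b - a))⁻¹ • volume.restrict (Set.Icc a b)

lemma unif_Iic_le {a b x : ℝ} (h : a < b) (hx : x ≤ b) :
    unif a b (Iic x) = ENNReal.ofReal ((x - a) / (b - a)) := by
  have hba : (0:ℝ) < b - a := by linarith
  rw [unif, Measure.smul_apply, smul_eq_mul, Measure.restrict_apply measurableSet_Iic]
  have hs : Iic x ∩ Icc a b = Icc a x := by
    ext y
    simp only [mem_inter_iff, mem_Iic, mem_Icc]
    exact ⟨fun ⟨h1, h2, _⟩ => ⟨h2, h1⟩, fun ⟨h1, h2⟩ => ⟨h2, h1, h2.trans hx⟩⟩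
  rw [hs, Real.volume_Icc, ENNReal.ofReal_div_of_pos hba, ENNReal.div_eq_inv_mul]

lemma unif_Iic_ge {a b x : ℝ} (h : a < b) (hx : b ≤ x) :
    unif a b (Iic x) = 1 := by
  have hba : (0:ℝ) < b - a := by linarith
  rw [unif, Measure.smul_apply, smul_eq_mul, Measure.restrict_apply measurableSet_Iic]
  have hs : Iic x ∩ Icc a b = Icc a b := inter_eq_right.mpr fun y hy => hy.2.trans hx
  rw [hs, Real.volume_Icc]
  exact ENNReal.inv_mul_cancel (ENNReal.ofReal_pos.mpr hba).ne' ENNReal.ofReal_ne_top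

lemma unif_Ici_ge {a b x : ℝ} (h : a < b) (hx : a ≤ x) :
    unif a b (Ici x) = ENNReal.ofReal ((b - x) / (b - a)) := by
  have hba : (0:ℝ) < b - a := by linarith
  rw [unif, Measure.smul_apply, smul_eq_mul, Measure.restrict_apply measurableSet_Ici]
  have hs : Ici x ∩ Icc a b = Icc x b := by
    ext y
    simp only [mem_inter_iff, mem_Ici, mem_Icc]
    exact ⟨fun ⟨h1, ⟨_, h3⟩⟩ => ⟨h1, h3⟩, fun ⟨h1, h2⟩ => ⟨h1, hx.trans h1, h2⟩⟩
  rw [hs, Real.volume_Icc, ENNReal.ofReal_div_of_pos hba, ENNReal.div_eq_inv_mul]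

lemma unif_Ici_le {a b x : ℝ} (h : a < b) (hx : x ≤ a) :
    unif a b (Ici x) = 1 := by
  have hba : (0:ℝ) < b - a := by linarith
  rw [unif, Measure.smul_apply, smul_eq_mul, Measure.restrict_apply measurableSet_Ici]
  have hs : Ici x ∩ Icc a b = Icc a b := inter_eq_right.mpr fun y hy => hx.trans hy.1
  rw [hs, Real.volume_Icc]
  exact ENNReal.inv_mul_cancel (ENNReal.ofReal_pos.mpr hba).ne' ENNReal.ofReal_ne_top

set_option maxHeartbeats 2000000 in
/-- Segments-on-a-line example of Section 5.1 of the paper: for `n ≥ 2` pairwise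
disjoint ordered segments `[a k, b k]`, `k = 1, …, n`, on the real line, the curve
depth of the `k`-th segment with respect to `Q_n = (1/n) Σ μ_i` equals `1/n` for the
extreme segments, and `1/n − ((n−1)/n)·log((1−t_k)^{1−t_k}·t_k^{t_k})` with
`t_k = (k−1)/(n−1)` otherwise.  In particular it depends only on `n` and `k`. -/
theorem segments_on_line_depth
    (n : ℕ) (hn : 2 ≤ n) (a b : ℕ → ℝ)
    (hab : ∀ k, 1 ≤ k → k ≤ n → a k < b k)
    (hord : ∀ k, 1 ≤ k → k < n → b k < a (k + 1)) :
    ∀ k, 1 ≤ k → k ≤ n →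
      ∫⁻ x, pointDepth1 ((n : ℝ≥0∞)⁻¹ • ∑ i ∈ Finset.Icc 1 n, unif (a i) (b i))
          (unif (a k) (b k)) x ∂(unif (a k) (b k)) =
        if k = 1 ∨ k = n then (n : ℝ≥0∞)⁻¹
        else ENNReal.ofReal
          (1 / n - ((n - 1 : ℝ) / n) *
            Real.log ((1 - ((k : ℝ) - 1) / ((n : ℝ) - 1)) ^ (1 - ((k : ℝ) - 1) / ((n : ℝ) - 1)) *
              (((k : ℝ) - 1) / ((n : ℝ) - 1)) ^ (((k : ℝ) - 1) / ((n : ℝ) - 1)))) := by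
  have chain : ∀ j, j ≤ n → ∀ i, 1 ≤ i → i < j → b i < a j := by
    intro j
    induction j with
    | zero => intro _ i _ h; omega
    | succ m ih =>
      intro hm i h1 hij
      rcases Nat.lt_succ_iff_lt_or_eq.mp hij with h | h
      · calc b i < a m := ih (by omega) i h1 h
          _ < b m := hab m (by omega) (by omega)
          _ < a (m+1) := hord m (by omega) (by omega)
      · subst h; exact hord i h1 (by omega)
  intro k hk1 hkn
  have hN2 : (2:ℝ) ≤ (n:ℝ) := by exact_mod_cast hn
  have hK1 : (1:ℝ) ≤ (k:ℝ) := by exact_mod_cast hk1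
  have hKN : (k:ℝ) ≤ (n:ℝ) := by exact_mod_cast hkn
  set N : ℝ := (n : ℝ) with hNdef
  set K : ℝ := (k : ℝ) with hKdef
  have hN0 : (0:ℝ) < N := by linarith
  set tk : ℝ := (K - 1) / (N - 1) with htkdef
  have htk0 : 0 ≤ tk := div_nonneg (by linarith) (by linarith)
  have htk1 : tk ≤ 1 := by
    rw [div_le_one (by linarith)]; linarith
  set f : ℝ → ℝ := fun t => (K - 1 + t) / (N * t) with hfdef
  set g : ℝ → ℝ := fun t => (N - K + (1 - t)) / (N * (1 - t)) with hgdef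
  set H : ℝ → ℝ := fun t => if t ≤ tk then g t else f t with hHdef
  set Q : Measure ℝ := (n : ℝ≥0∞)⁻¹ • ∑ i ∈ Finset.Icc 1 n, unif (a i) (b i) with hQdef
  have hakbk : a k < b k := hab k hk1 hkn
  have hL : (0:ℝ) < b k - a k := by linarith
  have hgf : ∀ t : ℝ, 0 < t → t < 1 → t ≤ tk → g t ≤ f t := by
    intro t h0 h1 hc
    rw [htkdef] at hc
    have h' : t * (N - 1) ≤ K - 1 := (le_div_iff₀ (by linarith)).mp hc
    simp only [hgdef, hfdef]
    rw [div_le_div_iff₀ (mul_pos hN0 (by linarith)) (mul_pos hN0 (by linarith))]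
    nlinarith [mul_nonneg hN0.le (sub_nonneg.mpr h')]
  have hfg : ∀ t : ℝ, 0 < t → t < 1 → tk ≤ t → f t ≤ g t := by
    intro t h0 h1 hc
    rw [htkdef] at hc
    have h' : K - 1 ≤ t * (N - 1) := (div_le_iff₀ (by linarith)).mp hc
    simp only [hgdef, hfdef]
    rw [div_le_div_iff₀ (mul_pos hN0 (by linarith)) (mul_pos hN0 (by linarith))]
    nlinarith [mul_nonneg hN0.le (sub_nonneg.mpr h')]
  have hHnn : ∀ t : ℝ, 0 ≤ t → t ≤ 1 → 0 ≤ H t := by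
    intro t h0 h1
    simp only [hHdef, hgdef, hfdef]
    split
    · exact div_nonneg (by linarith) (mul_nonneg hN0.le (by linarith))
    · exact div_nonneg (by linarith) (mul_nonneg hN0.le h0)
  have hfle : ∀ t : ℝ, 1/2 ≤ t → t ≤ 1 → f t ≤ 2 := by
    intro t h0 h1
    simp only [hfdef]
    rw [div_le_iff₀ (mul_pos hN0 (by linarith))]
    nlinarith [mul_nonneg hN0.le (by linarith : (0:ℝ) ≤ 2*t-1)]
  have hgle : ∀ t : ℝ, 0 ≤ t → t ≤ 1/2 → g t ≤ 2 := by
    intro t h0 h1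
    simp only [hgdef]
    rw [div_le_iff₀ (mul_pos hN0 (by linarith))]
    nlinarith [mul_nonneg hN0.le (by linarith : (0:ℝ) ≤ 1-2*t)]
  have hHle : ∀ t : ℝ, 0 < t → t < 1 → H t ≤ 2 := by
    intro t h0 h1
    simp only [hHdef]
    split
    case isTrue hc =>
      rcases le_or_gt t (1/2) with h | h
      · exact hgle t h0.le h
      · exact (hgf t h0 h1 hc).trans (hfle t h.le h1.le)
    case isFalse hc =>
      rcases le_or_gt (1/2) t with h | h
      · exact hfle t h h1.le
      · exact (hfg t h0 h1 (le_of_not_ge hc)).trans (hgle t h0.le h.le)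
  have hHmeas : Measurable H := by
    simp only [hHdef, hHdef, hgdef, hfdef]
    apply Measurable.ite measurableSet_Iic <;> fun_prop
  -- pointwise identity on the open segment
  have key : ∀ x ∈ Ioo (a k) (b k),
      pointDepth1 Q (unif (a k) (b k)) x
        = ENNReal.ofReal (H ((x - a k) / (b k - a k))) := by
    intro x hx
    obtain ⟨hxa, hxb⟩ := hx
    set t : ℝ := (x - a k) / (b k - a k) with htdef
    have ht0 : 0 < t := div_pos (by linarith) hL
    have ht1 : t < 1 := (div_lt_one hL).mpr (by linarith)
    have hmuIic : unif (a k) (b k) (Iic x) = ENNReal.ofReal t := unif_Iic_le hakbk hxb.le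
    have hmuIci : unif (a k) (b k) (Ici x) = ENNReal.ofReal (1 - t) := by
      rw [unif_Ici_ge hakbk hxa.le]
      congr 1
      rw [htdef]
      field_simp
      ring
    have hsing : Finset.Ioc (k-1) k = {k} := by
      ext i
      simp only [Finset.mem_Ioc, Finset.mem_singleton]
      omega
    have hsplit : ∀ F : ℕ → ℝ≥0∞, ∑ i ∈ Finset.Icc 1 n, F i
        = (∑ i ∈ Finset.Ioc 0 (k-1), F i) + (F k + ∑ i ∈ Finset.Ioc k n, F i) := by
      intro F
      rw [show Finset.Icc 1 n = Finset.Ioc 0 n from Finset.Icc_add_one_left_eq_Ioc 0 n,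
        ← Finset.sum_Ioc_consecutive _ (Nat.zero_le (k-1)) (show k-1 ≤ n by omega),
        ← Finset.sum_Ioc_consecutive _ (show k-1 ≤ k by omega) hkn,
        hsing, Finset.sum_singleton]
    have hQIic : Q (Iic x) = (n : ℝ≥0∞)⁻¹ * (((k - 1 : ℕ) : ℝ≥0∞) + ENNReal.ofReal t) := by
      rw [hQdef, Measure.smul_apply, smul_eq_mul, Measure.finset_sum_apply,
        hsplit (fun i => unif (a i) (b i) (Iic x))]
      congr 2
      · have h1 : ∀ i ∈ Finset.Ioc 0 (k-1), unif (a i) (b i) (Iic x) = 1 := by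
          intro i hi
          simp only [Finset.mem_Ioc] at hi
          have hik : b i < a k := chain k hkn i (by omega) (by omega)
          exact unif_Iic_ge (hab i (by omega) (by omega)) (by linarith)
        rw [Finset.sum_congr rfl h1, Finset.sum_const, Nat.card_Ioc, nsmul_eq_mul,
          mul_one, Nat.sub_zero]
      · rw [hmuIic]
        have h3 : ∑ i ∈ Finset.Ioc k n, unif (a i) (b i) (Iic x) = 0 := by
          apply Finset.sum_eq_zero
          intro i hi
          simp only [Finset.mem_Ioc] at hi
          have hai : b k < a i := chain i hi.2 k hk1 hi.1
          have habi : a i < b i := hab i (by omega) hi.2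
          rw [unif_Iic_le habi (by linarith), ENNReal.ofReal_eq_zero]
          apply div_nonpos_of_nonpos_of_nonneg <;> linarith
        rw [h3, add_zero]
    have hQIci : Q (Ici x) = (n : ℝ≥0∞)⁻¹ * (((n - k : ℕ) : ℝ≥0∞) + ENNReal.ofReal (1 - t)) := by
      rw [hQdef, Measure.smul_apply, smul_eq_mul, Measure.finset_sum_apply,
        hsplit (fun i => unif (a i) (b i) (Ici x))]
      congr 1
      have h1 : ∑ i ∈ Finset.Ioc 0 (k-1), unif (a i) (b i) (Ici x) = 0 := by
        apply Finset.sum_eq_zero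
        intro i hi
        simp only [Finset.mem_Ioc] at hi
        have hik : b i < a k := chain k hkn i (by omega) (by omega)
        have habi : a i < b i := hab i (by omega) (by omega)
        rw [unif_Ici_ge habi (by linarith), ENNReal.ofReal_eq_zero]
        apply div_nonpos_of_nonpos_of_nonneg <;> linarith
      have h3 : ∀ i ∈ Finset.Ioc k n, unif (a i) (b i) (Ici x) = 1 := by
        intro i hi
        simp only [Finset.mem_Ioc] at hi
        have hai : b k < a i := chain i hi.2 k hk1 hi.1
        exact unif_Ici_le (hab i (by omega) hi.2) (by linarith)
      rw [h1, zero_add, Finset.sum_congr rfl h3, Finset.sum_const, Nat.card_Ioc,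
        nsmul_eq_mul, mul_one, hmuIci, add_comm]
    have hcastk : (((k - 1 : ℕ)) : ℝ≥0∞) = ENNReal.ofReal (K - 1) := by
      rw [← ENNReal.ofReal_natCast]
      congr 1
      rw [Nat.cast_sub hk1, Nat.cast_one, hKdef]
    have hcastnk : (((n - k : ℕ)) : ℝ≥0∞) = ENNReal.ofReal (N - K) := by
      rw [← ENNReal.ofReal_natCast]
      congr 1
      rw [Nat.cast_sub hkn, hNdef, hKdef]
    have hcastn : ((n : ℝ≥0∞))⁻¹ = ENNReal.ofReal N⁻¹ := by
      rw [ENNReal.ofReal_inv_of_pos hN0, hNdef, ENNReal.ofReal_natCast]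
    have harg1 : Q (Iic x) / unif (a k) (b k) (Iic x) = ENNReal.ofReal (f t) := by
      rw [hQIic, hmuIic, hcastk, hcastn,
        ← ENNReal.ofReal_add (by linarith) ht0.le,
        ← ENNReal.ofReal_mul (by positivity),
        ← ENNReal.ofReal_div_of_pos ht0]
      congr 1
      simp only [hfdef]
      field_simp
    have harg2 : Q (Ici x) / unif (a k) (b k) (Ici x) = ENNReal.ofReal (g t) := by
      rw [hQIci, hmuIci, hcastnk, hcastn,
        ← ENNReal.ofReal_add (by linarith) (by linarith),
        ← ENNReal.ofReal_mul (by positivity),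
        ← ENNReal.ofReal_div_of_pos (by linarith)]
      congr 1
      simp only [hgdef]
      field_simp
    have hmono : Monotone ENNReal.ofReal := fun _ _ h => ENNReal.ofReal_le_ofReal h
    rw [pointDepth1, harg1, harg2, ← hmono.map_min]
    congr 1
    simp only [hHdef]
    split
    case isTrue hc => exact min_eq_right (hgf t ht0 ht1 hc)
    case isFalse hc => exact min_eq_left (hfg t ht0 ht1 (le_of_not_ge hc))
  -- reduction to a real interval integral
  have hTmeas : Measurable (fun x : ℝ => (x - a k) / (b k - a k)) := by fun_prop
  have hTmem : ∀ x ∈ Ioo (a k) (b k),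
      0 < (x - a k) / (b k - a k) ∧ (x - a k) / (b k - a k) < 1 := by
    intro x hx
    exact ⟨div_pos (by linarith [hx.1]) hL, (div_lt_one hL).mpr (by linarith [hx.2])⟩
  have hint : IntegrableOn (fun x => H ((x - a k) / (b k - a k))) (Ioo (a k) (b k)) volume := by
    apply Measure.integrableOn_of_bounded (M := 2)
    · exact (measure_Ioo_lt_top).ne
    · exact (hHmeas.comp hTmeas).aestronglyMeasurable
    · rw [ae_restrict_iff' measurableSet_Ioo]
      refine ae_of_all _ fun x hx => ?_
      obtain ⟨h0, h1⟩ := hTmem x hx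
      rw [Real.norm_eq_abs, abs_of_nonneg (hHnn _ h0.le h1.le)]
      exact hHle _ h0 h1
  have hnn : 0 ≤ᵐ[volume.restrict (Ioo (a k) (b k))]
      fun x => H ((x - a k) / (b k - a k)) := by
    refine (ae_restrict_iff' measurableSet_Ioo).mpr (ae_of_all _ fun x hx => ?_)
    obtain ⟨h0, h1⟩ := hTmem x hx
    exact hHnn _ h0.le h1.le
  have red : ∫⁻ x, pointDepth1 Q (unif (a k) (b k)) x ∂(unif (a k) (b k))
      = ENNReal.ofReal (∫ t in (0:ℝ)..1, H t) := by
    calc ∫⁻ x, pointDepth1 Q (unif (a k) (b k)) x ∂(unif (a k) (b k))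
        = (ENNReal.ofReal (b k - a k))⁻¹
            * ∫⁻ x in Icc (a k) (b k), pointDepth1 Q (unif (a k) (b k)) x :=
          lintegral_smul_measure _ _
      _ = (ENNReal.ofReal (b k - a k))⁻¹
            * ∫⁻ x in Ioo (a k) (b k), pointDepth1 Q (unif (a k) (b k)) x := by
          rw [← Measure.restrict_congr_set Ioo_ae_eq_Icc]
      _ = (ENNReal.ofReal (b k - a k))⁻¹
            * ∫⁻ x in Ioo (a k) (b k), ENNReal.ofReal (H ((x - a k) / (b k - a k))) := by
          congr 1
          exact setLIntegral_congr_fun measurableSet_Ioo key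
      _ = (ENNReal.ofReal (b k - a k))⁻¹
            * ENNReal.ofReal (∫ x in Ioo (a k) (b k), H ((x - a k) / (b k - a k))) := by
          rw [ofReal_integral_eq_lintegral_ofReal hint hnn]
      _ = (ENNReal.ofReal (b k - a k))⁻¹
            * ENNReal.ofReal ((b k - a k) * ∫ t in (0:ℝ)..1, H t) := by
          congr 2
          rw [Measure.restrict_congr_set Ioo_ae_eq_Ioc,
            ← intervalIntegral.integral_of_le hakbk.le,
            intervalIntegral.integral_comp_sub_right (fun y => H (y / (b k - a k))) (a k),
            sub_self,
            intervalIntegral.integral_comp_div (f := H) (c := b k - a k) hL.ne',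
            zero_div, div_self hL.ne', smul_eq_mul]
      _ = ENNReal.ofReal (∫ t in (0:ℝ)..1, H t) := by
          rw [ENNReal.ofReal_mul hL.le, ← mul_assoc,
            ENNReal.inv_mul_cancel (ENNReal.ofReal_pos.mpr hL).ne' ENNReal.ofReal_ne_top,
            one_mul]
  rw [red]
  rcases eq_or_ne k 1 with hk | hknot1
  · rw [if_pos (Or.inl hk)]
    have hK : K = 1 := by rw [hKdef, hk]; norm_num
    have htk' : tk = 0 := by rw [htkdef, hK]; norm_num
    have hI : ∫ t in (0:ℝ)..1, H t = 1/N := by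
      have hcon : ∀ x ∈ Set.uIoc (0:ℝ) 1, H x = 1/N := by
        intro x hx
        rw [uIoc_of_le (by norm_num), mem_Ioc] at hx
        simp only [hHdef, hfdef]
        rw [if_neg (by rw [htk']; exact not_le.mpr hx.1), hK]
        rw [show (1:ℝ) - 1 + x = x by ring]
        rw [div_eq_div_iff (mul_pos hN0 hx.1).ne' hN0.ne']
        ring
      rw [intervalIntegral.integral_congr_ae (g := fun _ => 1/N) (ae_of_all _ hcon),
        intervalIntegral.integral_const]
      norm_num
    rw [hI, one_div, ENNReal.ofReal_inv_of_pos hN0, hNdef, ENNReal.ofReal_natCast]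
  · rcases eq_or_ne k n with hk | hknotn
    · rw [if_pos (Or.inr hk)]
      have hK : K = N := by rw [hKdef, hNdef, hk]
      have htk' : tk = 1 := by
        rw [htkdef, hK]
        exact div_self (ne_of_gt (by linarith))
      have hone : ∀ᵐ x : ℝ, x ≠ (1:ℝ) := by
        have h0 : (volume : Measure ℝ) {(1:ℝ)} = 0 := measure_singleton 1
        simpa using measure_eq_zero_iff_ae_notMem.mp h0
      have hI : ∫ t in (0:ℝ)..1, H t = 1/N := by
        have hcon : ∀ᵐ x : ℝ, x ∈ Set.uIoc (0:ℝ) 1 → H x = 1/N := by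
          filter_upwards [hone] with x hx1 hx
          rw [uIoc_of_le (by norm_num), mem_Ioc] at hx
          have hxlt : x < 1 := lt_of_le_of_ne hx.2 hx1
          simp only [hHdef, hgdef]
          rw [if_pos (by rw [htk']; exact hx.2), hK]
          rw [show N - N + (1 - x) = 1 - x by ring]
          rw [div_eq_div_iff (mul_pos hN0 (by linarith : (0:ℝ) < 1 - x)).ne' hN0.ne']
          ring
        rw [intervalIntegral.integral_congr_ae (g := fun _ => 1/N) hcon,
          intervalIntegral.integral_const]
        norm_num
      rw [hI, one_div, ENNReal.ofReal_inv_of_pos hN0, hNdef, ENNReal.ofReal_natCast]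
    · rw [if_neg (by tauto)]
      have hkgt : 1 < k := by omega
      have hklt : k < n := by omega
      have hK1' : (1:ℝ) < K := by rw [hKdef]; exact_mod_cast hkgt
      have hKN' : K < N := by rw [hKdef, hNdef]; exact_mod_cast hklt
      have htk0' : 0 < tk := by rw [htkdef]; exact div_pos (by linarith) (by linarith)
      have htk1' : tk < 1 := by
        rw [htkdef, div_lt_one (by linarith)]
        linarith
      have h' : (N - 1) * tk = K - 1 := by
        rw [htkdef, mul_comm]
        exact div_mul_cancel₀ _ (ne_of_gt (by linarith))
      have hcross : g tk = f tk := by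
        simp only [hgdef, hfdef]
        rw [div_eq_div_iff (mul_pos hN0 (by linarith : (0:ℝ) < 1 - tk)).ne' (mul_pos hN0 htk0').ne']
        linear_combination N * h'
      have hgcont : ContinuousOn g (Icc 0 tk) := by
        simp only [hgdef]
        apply ContinuousOn.div (by fun_prop) (by fun_prop)
        intro x hx
        exact (mul_pos hN0 (by linarith [hx.2])).ne'
      have hfcont : ContinuousOn f (Icc tk 1) := by
        simp only [hfdef]
        apply ContinuousOn.div (by fun_prop) (by fun_prop)
        intro x hx
        exact (mul_pos hN0 (by linarith [hx.1])).ne'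
      have hgii : IntervalIntegrable g volume 0 tk := by
        rw [intervalIntegrable_iff_integrableOn_Ioc_of_le htk0]
        exact hgcont.integrableOn_Icc.mono_set Ioc_subset_Icc_self
      have hfii : IntervalIntegrable f volume tk 1 := by
        rw [intervalIntegrable_iff_integrableOn_Ioc_of_le htk1]
        exact hfcont.integrableOn_Icc.mono_set Ioc_subset_Icc_self
      have hHeqg : EqOn H g (Icc 0 tk) := by
        intro x hx
        simp only [hHdef]
        rw [if_pos hx.2]
      have hHeqf : EqOn H f (Icc tk 1) := by
        intro x hx
        simp only [hHdef]
        split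
        case isTrue hle =>
          have : x = tk := le_antisymm hle hx.1
          rw [this, hcross]
        case isFalse => rfl
      have hHint1 : IntervalIntegrable H volume 0 tk := by
        rw [intervalIntegrable_iff_integrableOn_Ioc_of_le htk0]
        exact (hgcont.integrableOn_Icc.mono_set Ioc_subset_Icc_self).congr_fun
          (fun x hx => (hHeqg (Ioc_subset_Icc_self hx)).symm) measurableSet_Ioc
      have hHint2 : IntervalIntegrable H volume tk 1 := by
        rw [intervalIntegrable_iff_integrableOn_Ioc_of_le htk1]
        exact (hfcont.integrableOn_Icc.mono_set Ioc_subset_Icc_self).congr_fun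
          (fun x hx => (hHeqf (Ioc_subset_Icc_self hx)).symm) measurableSet_Ioc
      have hIg : ∫ t in (0:ℝ)..tk, H t = (tk - (N-K)*Real.log (1-tk))/N := by
        rw [intervalIntegral.integral_congr (g := g) (by rwa [uIcc_of_le htk0])]
        have hderiv : ∀ x ∈ uIcc (0:ℝ) tk,
            HasDerivAt (fun t => (t - (N-K)*Real.log (1-t))/N) (g x) x := by
          intro x hx
          rw [uIcc_of_le htk0] at hx
          have hx1 : (0:ℝ) < 1 - x := by linarith [hx.2]
          have d1 : HasDerivAt (fun t:ℝ => 1 - t) (-1) x := by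
            simpa using (hasDerivAt_id x).const_sub 1
          have d2 : HasDerivAt (fun t:ℝ => Real.log (1-t)) ((1-x)⁻¹ * -1) x :=
            (Real.hasDerivAt_log hx1.ne').comp x d1
          have d3 : HasDerivAt (fun t:ℝ => (t - (N-K)*Real.log (1-t))/N)
              ((1 - (N-K)*((1-x)⁻¹ * -1))/N) x :=
            ((hasDerivAt_id x).sub (d2.const_mul (N-K))).div_const N
          convert d3 using 1
          simp only [hgdef]
          field_simp
          ring
        rw [intervalIntegral.integral_eq_sub_of_hasDerivAt hderiv hgii]
        rw [show (1:ℝ) - 0 = 1 by ring, Real.log_one]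
        ring
      have hIf : ∫ t in tk..(1:ℝ), H t = (1 - tk - (K-1)*Real.log tk)/N := by
        rw [intervalIntegral.integral_congr (g := f) (by rwa [uIcc_of_le htk1])]
        have hderiv : ∀ x ∈ uIcc tk (1:ℝ),
            HasDerivAt (fun t => (t + (K-1)*Real.log t)/N) (f x) x := by
          intro x hx
          rw [uIcc_of_le htk1] at hx
          have hx0 : (0:ℝ) < x := lt_of_lt_of_le htk0' hx.1
          have d2 : HasDerivAt (fun t:ℝ => Real.log t) x⁻¹ x := Real.hasDerivAt_log hx0.ne'
          have d3 : HasDerivAt (fun t:ℝ => (t + (K-1)*Real.log t)/N)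
              ((1 + (K-1)*x⁻¹)/N) x :=
            ((hasDerivAt_id x).add (d2.const_mul (K-1))).div_const N
          convert d3 using 1
          simp only [hfdef]
          field_simp
          ring
        rw [intervalIntegral.integral_eq_sub_of_hasDerivAt hderiv hfii]
        rw [Real.log_one]
        ring
      rw [← intervalIntegral.integral_add_adjacent_intervals hHint1 hHint2, hIg, hIf]
      congr 1
      rw [Real.log_mul (ne_of_gt (Real.rpow_pos_of_pos (by linarith) _))
          (ne_of_gt (Real.rpow_pos_of_pos htk0' _)),
        Real.log_rpow (by linarith), Real.log_rpow htk0']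
      linear_combination ((Real.log tk - Real.log (1-tk))/N) * h'
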